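/- arXiv:2504.14199 — 2 statements merged into one kernel-verified Lean document; each statement's English description precedes it below -/
import Mathlib

section
/- In the framed algebra f̃ (type depending on I), for i ∈ I and λ dominant, the element θ_λ = ∏_{j∈I} θ_{j'}^{(⟨j,λ⟩)} satisfies: θ_i^{⟨i,λ⟩+1} θ_{j'}^{(⟨j,λ⟩)} = θ_{j'}^{(⟨j,λ⟩)} θ_i^{⟨i,λ⟩+1} for j ≠ i, while θ_i^{(⟨i,λ⟩+1)} θ_{i'}^{(⟨i,λ⟩)} = ∑_{n=0}^{⟨i,λ⟩} (v^{-(⟨i,λ⟩+1-n)(⟨i,λ⟩-n)}/[n]!) θ_{i'}^{(⟨i,λ⟩-n)} (θ_i θ_{i'} - v^{-1} θ_{i'} θ_i)^n θ_i^{(⟨i,λ⟩+1-n)}. Consequently, (∑_{i∈I} f θ_i^{⟨i,λ⟩+1}) θ_λ ⊆ f θ_λ f ∩ ∑_{i∈I} f̃ θ_i. -/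
/-!
STATEMENT 8: In the framed algebra f̃, for i ∈ I and λ dominant (with
⟨j,λ⟩ = lamc j) and θ_λ = ∏_j θ_{j'}^{(⟨j,λ⟩)}:
(1) θ_i^{⟨i,λ⟩+1} θ_{j'}^{(⟨j,λ⟩)} = θ_{j'}^{(⟨j,λ⟩)} θ_i^{⟨i,λ⟩+1} for j ≠ i;
(2) θ_i^{(⟨i,λ⟩+1)} θ_{i'}^{(⟨i,λ⟩)}
      = ∑_{n=0}^{⟨i,λ⟩} (v^{-(⟨i,λ⟩+1-n)(⟨i,λ⟩-n)}/[n]!)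
          θ_{i'}^{(⟨i,λ⟩-n)} (θ_i θ_{i'} - v⁻¹ θ_{i'} θ_i)^n θ_i^{(⟨i,λ⟩+1-n)};
(3) consequently (∑_i f θ_i^{⟨i,λ⟩+1}) θ_λ ⊆ f θ_λ f ∩ ∑_i f̃ θ_i.

Encoding: A is the framed algebra with generators θ : Ĩ → A satisfying the
relevant quantum Serre relations (commutation for i·j' = 0, type A₂ relations
for i·i' = -1); f = Algebra.adjoin K {θ_i}.
-/

open scoped BigOperators

noncomputable section

abbrev K : Type := RatFunc ℚ

noncomputable def v : K := RatFunc.X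

noncomputable def qint (n : ℤ) : K := (v ^ n - v ^ (-n)) / (v - v⁻¹)

noncomputable def qfact (m : ℕ) : K := ∏ k ∈ Finset.range m, qint ((k : ℤ) + 1)

noncomputable def dp {A : Type*} [Ring A] [Algebra K A] (a : A) (n : ℕ) : A :=
  (qfact n)⁻¹ • a ^ n


lemma hv : v ≠ 0 := RatFunc.X_ne_zero

lemma v_pow_ne_one (k : ℕ) (hk : k ≠ 0) : v ^ k ≠ 1 := by
  intro h
  have hX : (RatFunc.X : K) = algebraMap (Polynomial ℚ) K Polynomial.X := (RatFunc.algebraMap_X).symm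
  rw [v, hX, ← map_pow, ← map_one (algebraMap (Polynomial ℚ) K)] at h
  have := RatFunc.algebraMap_injective ℚ h
  have h2 := congrArg Polynomial.natDegree this
  simp [Polynomial.natDegree_X_pow] at h2
  exact hk h2

lemma hvsub : v - v⁻¹ ≠ 0 := by
  intro h
  have h2 : v * v - 1 = 0 := by
    have := congrArg (fun x => x * v) h
    simpa [sub_mul, inv_mul_cancel₀ hv] using this
  have : v ^ 2 = 1 := by rw [pow_two]; linear_combination h2
  exact v_pow_ne_one 2 (by norm_num) this

lemma qint_pos_ne_zero (n : ℕ) (hn : n ≠ 0) : qint n ≠ 0 := by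
  unfold qint
  apply div_ne_zero _ hvsub
  intro h
  rw [sub_eq_zero] at h
  have h1 : v ^ ((n:ℤ) + (n:ℤ)) = v ^ ((-(n:ℤ)) + (n:ℤ)) := by
    rw [zpow_add₀ hv, zpow_add₀ hv, h]
  rw [neg_add_cancel, zpow_zero] at h1
  have h2 : ((n:ℤ) + n) = ((n + n : ℕ) : ℤ) := by push_cast; ring
  rw [h2, zpow_natCast] at h1
  exact v_pow_ne_one (n+n) (by omega) h1

lemma qint_zero : qint 0 = 0 := by simp [qint]

lemma qint_one : qint 1 = 1 := by
  unfold qint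
  rw [zpow_one, zpow_neg, zpow_one, div_self hvsub]

lemma qint_add (m n : ℤ) : qint (m + n) = v ^ n * qint m + v ^ (-m) * qint n := by
  unfold qint
  rw [← mul_div_assoc, ← mul_div_assoc, ← add_div]
  congr 1
  simp only [neg_add, zpow_add₀ hv]
  ring

lemma qint_two : qint 2 = v + v⁻¹ := by
  have : (2:ℤ) = 1 + 1 := by norm_num
  rw [this, qint_add, qint_one, zpow_one, zpow_neg_one, mul_one, mul_one]

lemma qfact_zero : qfact 0 = 1 := by simp [qfact]

lemma qfact_succ (n : ℕ) : qfact (n+1) = qfact n * qint ((n:ℤ)+1) := by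
  unfold qfact
  rw [Finset.prod_range_succ]

lemma qfact_ne_zero (n : ℕ) : qfact n ≠ 0 := by
  induction n with
  | zero => simp [qfact_zero]
  | succ k ih =>
    rw [qfact_succ]
    refine mul_ne_zero ih ?_
    have : ((k:ℤ)+1) = ((k+1 : ℕ) : ℤ) := by push_cast; ring
    rw [this]
    exact qint_pos_ne_zero (k+1) (by omega)

noncomputable def qbc : ℕ → ℕ → K
  | _, 0 => 1
  | 0, _+1 => 0
  | p+1, n+1 => v ^ (-((p:ℤ) - n)) * qbc p n + v ^ ((n:ℤ)+1) * qbc p (n+1)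

lemma qbc_zero_right (p : ℕ) : qbc p 0 = 1 := by cases p <;> rfl

lemma qbc_succ_succ (p n : ℕ) :
    qbc (p+1) (n+1) = v ^ (-((p:ℤ) - n)) * qbc p n + v ^ ((n:ℤ)+1) * qbc p (n+1) := rfl

lemma qbc_eq_zero : ∀ p n : ℕ, p < n → qbc p n = 0 := by
  intro p
  induction p with
  | zero => intro n h; match n, h with | (k+1), _ => rfl
  | succ q ih =>
    intro n h
    match n, h with
    | (m+1), h =>
      rw [qbc_succ_succ, ih m (by omega), ih (m+1) (by omega)]
      ring

lemma qbc_mul_fact : ∀ p n : ℕ, n ≤ p → qbc p n * (qfact n * qfact (p - n)) = qfact p := by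
  intro p
  induction p with
  | zero => intro n h; interval_cases n; simp [qbc_zero_right, qfact_zero]
  | succ q ih =>
    intro n hn
    match n with
    | 0 => simp [qbc_zero_right, qfact_zero]
    | (m+1) =>
      have hm : m ≤ q := by omega
      rw [qbc_succ_succ, add_mul]
      rcases Nat.lt_or_ge m q with hlt | hge
      · -- m+1 ≤ q
        have e1 : qfact (m+1) = qfact m * qint ((m:ℤ)+1) := qfact_succ m
        have e2 : q + 1 - (m + 1) = (q - (m+1)) + 1 := by omega
        have e3 : qfact (q + 1 - (m+1)) = qfact (q - (m+1)) * qint ((q:ℤ) - m) := by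
          rw [e2, qfact_succ]
          congr 2
          omega
        have h1 : v ^ (-((q:ℤ) - m)) * qbc q m * (qfact (m+1) * qfact (q + 1 - (m + 1)))
            = v ^ (-((q:ℤ) - m)) * qint ((m:ℤ)+1) * qfact q := by
          have e4 : q + 1 - (m+1) = q - m := by omega
          rw [e4, e1]
          have := ih m hm
          calc v ^ (-((q:ℤ) - m)) * qbc q m * (qfact m * qint ((m:ℤ)+1) * qfact (q - m))
              = v ^ (-((q:ℤ) - m)) * qint ((m:ℤ)+1) * (qbc q m * (qfact m * qfact (q - m))) := by ring
            _ = _ := by rw [this]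
        have h2 : v ^ ((m:ℤ)+1) * qbc q (m+1) * (qfact (m+1) * qfact (q + 1 - (m + 1)))
            = v ^ ((m:ℤ)+1) * qint ((q:ℤ) - m) * qfact q := by
          rw [e3]
          have := ih (m+1) hlt
          calc v ^ ((m:ℤ)+1) * qbc q (m+1) * (qfact (m+1) * (qfact (q - (m+1)) * qint ((q:ℤ) - m)))
              = v ^ ((m:ℤ)+1) * qint ((q:ℤ) - m) * (qbc q (m+1) * (qfact (m+1) * qfact (q - (m+1)))) := by ring
            _ = _ := by rw [this]
        rw [h1, h2]
        have key : v ^ (-((q:ℤ) - m)) * qint ((m:ℤ)+1) + v ^ ((m:ℤ)+1) * qint ((q:ℤ) - m)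
            = qint ((q:ℤ)+1) := by
          have := qint_add ((q:ℤ) - m) ((m:ℤ)+1)
          have e : ((q:ℤ) - m) + ((m:ℤ)+1) = (q:ℤ)+1 := by ring
          rw [e] at this
          rw [this]; ring
        rw [qfact_succ]
        calc v ^ (-((q:ℤ) - m)) * qint ((m:ℤ)+1) * qfact q + v ^ ((m:ℤ)+1) * qint ((q:ℤ) - m) * qfact q
            = (v ^ (-((q:ℤ) - m)) * qint ((m:ℤ)+1) + v ^ ((m:ℤ)+1) * qint ((q:ℤ) - m)) * qfact q := by ring
          _ = qfact q * qint ((q:ℤ)+1) := by rw [key]; ring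
      · -- m = q
        have hq : m = q := by omega
        subst hq
        rw [qbc_eq_zero m (m+1) (by omega)]
        have e4 : m + 1 - (m+1) = 0 := by omega
        have e5 : (-((m:ℤ) - m)) = 0 := by ring
        rw [e4, e5, zpow_zero, one_mul, qfact_zero, mul_one]
        have := ih m le_rfl
        rw [Nat.sub_self, qfact_zero, mul_one] at this
        calc qbc m m * qfact (m+1) + v ^ ((m:ℤ)+1) * 0 * qfact (m+1)
            = qbc m m * qfact m * qint ((m:ℤ)+1) := by rw [qfact_succ]; ring
          _ = qfact m * qint ((m:ℤ)+1) := by rw [this]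
          _ = qfact (m+1) := (qfact_succ m).symm

noncomputable def ee (N n : ℕ) : K := ∏ k ∈ Finset.range n, qint ((N:ℤ) - k)

lemma ee_zero (N : ℕ) : ee N 0 = 1 := by simp [ee]

lemma ee_succ (N n : ℕ) : ee N (n+1) = ee N n * qint ((N:ℤ) - n) := by
  unfold ee; rw [Finset.prod_range_succ]

lemma ee_top (N : ℕ) : ee N (N+1) = 0 := by
  rw [ee_succ]
  have : ((N:ℤ) - N) = 0 := by ring
  rw [this, qint_zero, mul_zero]

lemma ee_mul_qfact : ∀ n N : ℕ, n ≤ N → ee N n * qfact (N - n) = qfact N := by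
  intro n
  induction n with
  | zero => intro N h; simp [ee_zero]
  | succ m ih =>
    intro N h
    have e1 : qfact (N - m) = qfact (N - (m+1)) * qint ((N:ℤ) - m) := by
      have e2 : N - m = (N - (m+1)) + 1 := by omega
      rw [e2, qfact_succ]
      have e3 : ((N - (m+1) : ℕ) : ℤ) + 1 = (N:ℤ) - (m:ℤ) := by omega
      rw [e3]
    rw [ee_succ]
    calc ee N m * qint ((N:ℤ) - m) * qfact (N - (m+1))
        = ee N m * (qfact (N - (m+1)) * qint ((N:ℤ) - m)) := by ring
      _ = ee N m * qfact (N - m) := by rw [← e1]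
      _ = qfact N := ih N (by omega)

noncomputable def dd (N p n : ℕ) : K :=
  qbc p n * ee N n * v ^ (-(((p:ℤ) - n) * ((N:ℤ) - n)))

lemma vmerge (x y z : K) (α β γ : ℤ) (h : α + β = γ) :
    v ^ α * x * (y * z) * v ^ β = x * y * v ^ γ * z := by
  rw [← h, zpow_add₀ hv]; ring

lemma dd_zero_rec (N p : ℕ) : dd N (p+1) 0 = dd N p 0 * v ^ (-(N:ℤ)) := by
  unfold dd
  rw [qbc_zero_right, qbc_zero_right]
  push_cast
  rw [mul_assoc (1 * ee N 0), ← zpow_add₀ hv]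
  congr 2
  ring

lemma dd_succ_rec (N p n : ℕ) :
    dd N (p+1) (n+1) = dd N p n * qint ((N:ℤ) - n) + dd N p (n+1) * v ^ (2*(n:ℤ) + 2 - N) := by
  unfold dd
  rw [qbc_succ_succ, ee_succ, add_mul, add_mul]
  push_cast
  congr 1
  · calc v ^ (-((p:ℤ) - n)) * qbc p n * (ee N n * qint ((N:ℤ) - n)) * v ^ (-(((p:ℤ) + 1 - ((n:ℤ)+1)) * ((N:ℤ) - ((n:ℤ)+1))))
        = qbc p n * ee N n * v ^ (-(((p:ℤ) - n) * ((N:ℤ) - n))) * qint ((N:ℤ) - n) := by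
          apply vmerge
          ring
      _ = _ := by ring
  · calc v ^ ((n:ℤ)+1) * qbc p (n+1) * (ee N n * qint ((N:ℤ) - n)) * v ^ (-(((p:ℤ) + 1 - ((n:ℤ)+1)) * ((N:ℤ) - ((n:ℤ)+1))))
        = qbc p (n+1) * ee N n * v ^ (-(((p:ℤ) - ((n:ℤ)+1)) * ((N:ℤ) - ((n:ℤ)+1))) + (2*(n:ℤ) + 2 - N)) * qint ((N:ℤ) - n) := by
          apply vmerge
          ring
      _ = _ := by
          rw [zpow_add₀ hv]
          have : ((n:ℕ)+1 : ℕ) = ((n+1 : ℕ)) := rfl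
          push_cast
          ring

lemma dd_diag_zero (N : ℕ) : dd N (N+1) (N+1) = 0 := by
  unfold dd
  rw [ee_top]
  ring

lemma dd_zero_zero (N : ℕ) : dd N 0 0 = 1 := by
  unfold dd
  rw [qbc_zero_right, ee_zero]
  norm_num

noncomputable def ddshift (N p : ℕ) : ℕ → K
  | 0 => 0
  | n+1 => dd N p n * qint ((N:ℤ) - n)

section AlgebraSide

variable {A : Type*} [Ring A] [Algebra K A]

noncomputable def Ee (a b : A) : A := a * b - v⁻¹ • (b * a)

variable (a b : A)

lemma qint_two_ne_zero : qint 2 ≠ 0 := qint_pos_ne_zero 2 (by omega)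

-- from the Serre relations (right-associated form)
variable (hab : a * (a * b) + b * (a * a) = qint 2 • (a * (b * a)))
variable (hba : b * (b * a) + a * (b * b) = qint 2 • (b * (a * b)))

include hab in
lemma aE_comm : a * Ee a b = v • (Ee a b * a) := by
  unfold Ee
  rw [qint_two] at hab
  have key : a * (a * b) = (v + v⁻¹) • (a * (b * a)) - b * (a * a) := eq_sub_of_add_eq hab
  rw [mul_sub, mul_smul_comm, sub_mul, smul_mul_assoc, smul_sub, smul_smul,
    mul_inv_cancel₀ hv, one_smul]
  simp only [mul_assoc]
  rw [key, add_smul]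
  abel

include hba in
lemma Eb_comm : Ee a b * b = v • (b * Ee a b) := by
  unfold Ee
  rw [qint_two] at hba
  have hba2 : a * (b * b) + b * (b * a) = (v + v⁻¹) • (b * (a * b)) := by
    rw [← hba]; abel
  have key : a * (b * b) = (v + v⁻¹) • (b * (a * b)) - b * (b * a) := eq_sub_of_add_eq hba2
  rw [sub_mul, smul_mul_assoc, mul_sub, mul_smul_comm, smul_sub, smul_smul,
    mul_inv_cancel₀ hv, one_smul]
  simp only [mul_assoc]
  rw [key, add_smul]
  abel

include hab in
lemma aEn_comm (n : ℕ) : a * (Ee a b) ^ n = (v ^ n) • ((Ee a b) ^ n * a) := by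
  induction n with
  | zero => simp
  | succ k ih =>
    rw [pow_succ, ← mul_assoc, ih, smul_mul_assoc, mul_assoc, aE_comm a b hab,
      mul_smul_comm, smul_smul, ← pow_succ]
    rw [mul_assoc]

include hba in
lemma abM (M : ℕ) : a * b ^ (M+1)
    = qint ((M:ℤ)+1) • (b ^ M * Ee a b) + (v ^ (-((M:ℤ)+1))) • (b ^ (M+1) * a) := by
  induction M with
  | zero =>
    have h2 : a * b = Ee a b + v⁻¹ • (b * a) := by unfold Ee; abel
    simp only [Nat.cast_zero, zero_add, pow_one, pow_zero, one_mul]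
    rw [qint_one, one_smul, h2, zpow_neg, zpow_one]
  | succ M ih =>
    have step : a * b ^ (M+2) = (a * b ^ (M+1)) * b := by
      rw [mul_assoc, ← pow_succ]
    have h1 : b ^ M * (Ee a b * b) = v • (b ^ (M+1) * Ee a b) := by
      rw [Eb_comm a b hba, mul_smul_comm, ← mul_assoc, ← pow_succ]
    have h2 : a * b = Ee a b + v⁻¹ • (b * a) := by unfold Ee; abel
    have h3 : b ^ (M+1) * (a * b) = b ^ (M+1) * Ee a b + v⁻¹ • (b ^ (M+2) * a) := by
      rw [h2, mul_add, mul_smul_comm, ← mul_assoc, ← pow_succ]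
    rw [step, ih, add_mul, smul_mul_assoc, smul_mul_assoc, mul_assoc, h1, mul_assoc, h3]
    rw [smul_smul, smul_add, smul_smul]
    have cast1 : ((M+1 : ℕ) : ℤ) + 1 = ((M:ℤ)+1)+1 := by push_cast; ring
    rw [cast1]
    have c2 : qint (((M:ℤ)+1)+1) = qint ((M:ℤ)+1) * v + v ^ (-((M:ℤ)+1)) := by
      have h := qint_add ((M:ℤ)+1) 1
      rw [qint_one, zpow_one, mul_one] at h
      rw [h]; ring
    have c3 : v ^ (-((M:ℤ)+1)) * v⁻¹ = v ^ (-(((M:ℤ)+1)+1)) := by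
      rw [show (-(((M:ℤ)+1)+1)) = (-((M:ℤ)+1)) + (-1) from by ring, zpow_add₀ hv, zpow_neg_one]
    rw [c2, c3, add_smul]
    abel

include hab hba in
lemma Pform (N : ℕ) : ∀ p : ℕ, p ≤ N + 1 →
    a ^ p * b ^ N = ∑ n ∈ Finset.range (p+1),
      dd N p n • (b ^ (N - n) * (Ee a b) ^ n * a ^ (p - n)) := by
  intro p
  induction p with
  | zero =>
    intro _
    simp [dd_zero_zero]
  | succ p ih =>
    intro hp
    have hpN : p ≤ N := by omega
    have lhs1 : a ^ (p+1) * b ^ N = a * (a ^ p * b ^ N) := by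
      rw [pow_succ', mul_assoc]
    rw [lhs1, ih (by omega), Finset.mul_sum]
    have term : ∀ n ∈ Finset.range (p+1),
        a * (dd N p n • (b ^ (N - n) * (Ee a b) ^ n * a ^ (p - n)))
        = (dd N p n * qint ((N:ℤ) - n)) • (b ^ (N - (n+1)) * (Ee a b) ^ (n+1) * a ^ ((p+1) - (n+1)))
          + (dd N p n * v ^ (2*(n:ℤ) - N)) • (b ^ (N - n) * (Ee a b) ^ n * a ^ ((p+1) - n)) := by
      intro n hn
      rw [Finset.mem_range] at hn
      have hnp : n ≤ p := by omega
      have hnN : n ≤ N := by omega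
      have haveB : b ^ (N-n) * a * ((Ee a b)^n * a^(p-n))
          = (v^(n:ℕ)) • (b^(N-n) * (Ee a b)^n * a^((p+1)-n)) := by
        rw [show (p+1)-n = (p-n)+1 from by omega]
        calc b^(N-n) * a * ((Ee a b)^n * a^(p-n))
            = b^(N-n) * (a * (Ee a b)^n) * a^(p-n) := by simp only [mul_assoc]
          _ = b^(N-n) * ((v^(n:ℕ)) • ((Ee a b)^n * a)) * a^(p-n) := by
              rw [aEn_comm a b hab n]
          _ = (v^(n:ℕ)) • (b^(N-n) * ((Ee a b)^n * (a * a^(p-n)))) := by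
              rw [mul_smul_comm, smul_mul_assoc]
              simp only [mul_assoc]
          _ = (v^(n:ℕ)) • (b^(N-n) * (Ee a b)^n * a^((p-n)+1)) := by
              rw [pow_succ']
              simp only [mul_assoc]
      have hscal : v ^ (-((N:ℤ)-n)) * (v^(n:ℕ)) = v ^ (2*(n:ℤ) - N) := by
        rw [← zpow_natCast v n, ← zpow_add₀ hv]
        congr 1
        ring
      rcases Nat.lt_or_ge n N with hlt | hge
      · -- n < N
        have e1 : N - n = (N - (n+1)) + 1 := by omega
        have babm := abM a b hba (N - (n+1))
        have ecast : ((N - (n+1) : ℕ) : ℤ) + 1 = (N:ℤ) - n := by omega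
        rw [ecast, ← e1] at babm
        have haveA : b ^ (N-(n+1)) * Ee a b * ((Ee a b)^n * a^(p-n))
            = b^(N-(n+1)) * (Ee a b)^(n+1) * a^((p+1)-(n+1)) := by
          rw [show (p+1)-(n+1) = p-n from by omega]
          calc b^(N-(n+1)) * Ee a b * ((Ee a b)^n * a^(p-n))
              = b^(N-(n+1)) * (Ee a b * (Ee a b)^n) * a^(p-n) := by simp only [mul_assoc]
            _ = _ := by rw [← pow_succ']
        calc a * (dd N p n • (b ^ (N - n) * (Ee a b) ^ n * a ^ (p - n)))
            = dd N p n • ((a * b ^ (N-n)) * ((Ee a b)^n * a^(p-n))) := by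
              rw [mul_smul_comm]
              simp only [mul_assoc]
          _ = dd N p n • (qint ((N:ℤ)-n) • (b^(N-(n+1)) * Ee a b * ((Ee a b)^n * a^(p-n)))
              + v ^ (-((N:ℤ)-n)) • (b^(N-n) * a * ((Ee a b)^n * a^(p-n)))) := by
              rw [babm, add_mul, smul_mul_assoc, smul_mul_assoc]
          _ = dd N p n • (qint ((N:ℤ)-n) • (b^(N-(n+1)) * (Ee a b)^(n+1) * a^((p+1)-(n+1)))
              + (v ^ (-((N:ℤ)-n)) * v^(n:ℕ)) • (b^(N-n) * (Ee a b)^n * a^((p+1)-n))) := by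
              rw [haveA, haveB, smul_smul]
          _ = _ := by
              rw [hscal, smul_add, smul_smul, smul_smul]
      · -- n = N
        have eq0 : qint ((N:ℤ) - n) = 0 := by
          rw [show (N:ℤ) - n = 0 from by omega, qint_zero]
        have hb1 : b ^ (N-n) = (1:A) := by
          rw [show N - n = 0 from by omega, pow_zero]
        rw [eq0, mul_zero, zero_smul, zero_add]
        calc a * (dd N p n • (b ^ (N - n) * (Ee a b) ^ n * a ^ (p - n)))
            = dd N p n • (b ^ (N-n) * a * ((Ee a b)^n * a^(p-n))) := by
              rw [mul_smul_comm, hb1]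
              simp only [one_mul, mul_assoc]
          _ = dd N p n • ((v^(n:ℕ)) • (b^(N-n) * (Ee a b)^n * a^((p+1)-n))) := by
              rw [haveB]
          _ = _ := by
              rw [smul_smul]
              congr 1
              rw [← zpow_natCast v n, show 2*(n:ℤ) - N = (n:ℤ) from by omega]
    rw [Finset.sum_congr rfl term, Finset.sum_add_distrib]
    have reindex : ∑ n ∈ Finset.range (p+1),
        (dd N p n * qint ((N:ℤ) - n)) • (b ^ (N - (n+1)) * (Ee a b) ^ (n+1) * a ^ ((p+1) - (n+1)))
        = ∑ n ∈ Finset.range (p+2),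
            (ddshift N p n) • (b ^ (N - n) * (Ee a b) ^ n * a ^ ((p+1) - n)) := by
      rw [Finset.sum_range_succ' (fun n => (ddshift N p n) • (b ^ (N - n) * (Ee a b) ^ n * a ^ ((p+1) - n))) (p+1)]
      simp only [ddshift]
      rw [zero_smul, add_zero]
    have extend : ∑ n ∈ Finset.range (p+1),
        (dd N p n * v ^ (2*(n:ℤ) - N)) • (b ^ (N - n) * (Ee a b) ^ n * a ^ ((p+1) - n))
        = ∑ n ∈ Finset.range (p+2),
            (dd N p n * v ^ (2*(n:ℤ) - N)) • (b ^ (N - n) * (Ee a b) ^ n * a ^ ((p+1) - n)) := by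
      rw [Finset.sum_range_succ
        (fun n => (dd N p n * v ^ (2*(n:ℤ) - N)) • (b ^ (N - n) * (Ee a b) ^ n * a ^ ((p+1) - n)))
        (p+1)]
      have hz : dd N p (p+1) = 0 := by
        unfold dd
        rw [qbc_eq_zero p (p+1) (by omega)]
        ring
      rw [hz, zero_mul, zero_smul, add_zero]
    rw [reindex, extend, ← Finset.sum_add_distrib]
    apply Finset.sum_congr rfl
    intro n _
    rw [← add_smul]
    congr 1
    match n with
    | 0 =>
      show ddshift N p 0 + dd N p 0 * v ^ (2*((0:ℕ):ℤ) - N) = dd N (p+1) 0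
      rw [dd_zero_rec]
      show (0:K) + dd N p 0 * v ^ (2*((0:ℕ):ℤ) - N) = dd N p 0 * v ^ (-(N:ℤ))
      rw [zero_add]
      congr 2
      all_goals (push_cast; ring)
    | (m+1) =>
      show ddshift N p (m+1) + dd N p (m+1) * v ^ (2*((m+1:ℕ):ℤ) - N) = dd N (p+1) (m+1)
      rw [dd_succ_rec]
      show dd N p m * qint ((N:ℤ) - m) + dd N p (m+1) * v ^ (2*((m+1:ℕ):ℤ) - N) = _
      congr 2
      all_goals (push_cast; ring)

include hab hba in
lemma part2_gen (N : ℕ) :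
    dp a (N+1) * dp b N = ∑ n ∈ Finset.range (N+1),
      (v ^ (-(((N + 1 - n : ℕ) : ℤ) * ((N - n : ℕ) : ℤ))) * (qfact n)⁻¹) •
        (dp b (N-n) * (Ee a b) ^ n * dp a (N+1-n)) := by
  have hP := Pform a b hab hba N (N+1) le_rfl
  unfold dp
  rw [smul_mul_assoc, mul_smul_comm, smul_smul, hP, Finset.smul_sum,
    Finset.sum_range_succ, dd_diag_zero, zero_smul, smul_zero, add_zero]
  apply Finset.sum_congr rfl
  intro n hn
  rw [Finset.mem_range] at hn
  have hnN : n ≤ N := by omega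
  simp only [smul_mul_assoc, mul_smul_comm, smul_smul]
  congr 1
  -- scalar identity
  unfold dd
  have c1 : ((N + 1 - n : ℕ) : ℤ) = (((N+1:ℕ)):ℤ) - n := by omega
  have c2 : ((N - n : ℕ) : ℤ) = ((N:ℕ):ℤ) - n := by omega
  have ecast : (-(((((N+1:ℕ)):ℤ) - (n:ℤ)) * (((N:ℕ):ℤ) - (n:ℤ)))) = -(((N + 1 - n : ℕ) : ℤ) * ((N - n : ℕ) : ℤ)) := by
    rw [c1, c2]
  have hq1 := qbc_mul_fact (N+1) n (by omega)
  have hq2 := ee_mul_qfact n N hnN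
  have hf1 := qfact_ne_zero (N+1)
  have hf2 := qfact_ne_zero N
  have hf3 := qfact_ne_zero n
  have hf4 := qfact_ne_zero (N-n)
  have hf5 := qfact_ne_zero (N+1-n)
  rw [ecast]
  generalize v ^ (-(((N + 1 - n : ℕ) : ℤ) * ((N - n : ℕ) : ℤ))) = V
  have hqbc : qbc (N+1) n = qfact (N+1) * (qfact n)⁻¹ * (qfact (N+1-n))⁻¹ := by
    field_simp
    linear_combination hq1
  have hee : ee N n = qfact N * (qfact (N-n))⁻¹ := by
    field_simp
    linear_combination hq2
  rw [hqbc, hee]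
  field_simp

-- the A2 span machinery
include hab hba in
lemma bmE_mem (N : ℕ) : ∀ n m : ℕ, m + n = N →
    b ^ m * (Ee a b) ^ n ∈ Submodule.span K {z : A | ∃ r s : ℕ, z = a ^ r * b ^ N * a ^ s} := by
  set SS := Submodule.span K {z : A | ∃ r s : ℕ, z = a ^ r * b ^ N * a ^ s} with hSS
  have hgen : ∀ r s : ℕ, a ^ r * b ^ N * a ^ s ∈ SS := fun r s =>
    Submodule.subset_span ⟨r, s, rfl⟩
  have hleft : ∀ x ∈ SS, a * x ∈ SS := by
    intro x hx
    induction hx using Submodule.span_induction with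
    | mem z hz =>
      obtain ⟨r, s, rfl⟩ := hz
      have : a * (a ^ r * b ^ N * a ^ s) = a ^ (r+1) * b ^ N * a ^ s := by
        rw [pow_succ']
        simp only [mul_assoc]
      rw [this]
      exact hgen _ _
    | zero => rw [mul_zero]; exact Submodule.zero_mem _
    | add y z _ _ hy hz => rw [mul_add]; exact Submodule.add_mem _ hy hz
    | smul c y _ hy => rw [mul_smul_comm]; exact Submodule.smul_mem _ _ hy
  have hright : ∀ x ∈ SS, x * a ∈ SS := by
    intro x hx
    induction hx using Submodule.span_induction with
    | mem z hz =>
      obtain ⟨r, s, rfl⟩ := hz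
      have : (a ^ r * b ^ N * a ^ s) * a = a ^ r * b ^ N * a ^ (s+1) := by
        rw [pow_succ]
        simp only [mul_assoc]
      rw [this]
      exact hgen _ _
    | zero => rw [zero_mul]; exact Submodule.zero_mem _
    | add y z _ _ hy hz => rw [add_mul]; exact Submodule.add_mem _ hy hz
    | smul c y _ hy => rw [smul_mul_assoc]; exact Submodule.smul_mem _ _ hy
  intro n
  induction n with
  | zero =>
    intro m hm
    rw [pow_zero, mul_one]
    have : b ^ m = a ^ 0 * b ^ N * a ^ 0 := by
      simp only [pow_zero, one_mul, mul_one]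
      rw [show m = N from by omega]
    rw [this]
    exact hgen 0 0
  | succ n ih =>
    intro m hm
    have hm1 : (m+1) + n = N := by omega
    have ihm := ih (m+1) hm1
    have habm := abM a b hba m
    have hq : qint ((m:ℤ)+1) ≠ 0 := by
      rw [show ((m:ℤ)+1) = ((m+1 : ℕ) : ℤ) from by push_cast; ring]
      exact qint_pos_ne_zero (m+1) (by omega)
    -- b^m * X = (qint (m+1))⁻¹ • (a * b^(m+1) - v^(-(m+1)) • (b^(m+1) * a))
    have hsolve : b ^ m * Ee a b
        = (qint ((m:ℤ)+1))⁻¹ • (a * b ^ (m+1) - (v ^ (-((m:ℤ)+1))) • (b ^ (m+1) * a)) := by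
      rw [habm, add_sub_cancel_right, smul_smul, inv_mul_cancel₀ hq, one_smul]
    have hstep : b ^ m * (Ee a b) ^ (n+1)
        = (qint ((m:ℤ)+1))⁻¹ • (a * (b ^ (m+1) * (Ee a b) ^ n)
            - (v ^ (-((m:ℤ)+1)) * v ^ (n:ℕ)) • ((b ^ (m+1) * (Ee a b) ^ n) * a)) := by
      have e1 : b ^ m * (Ee a b) ^ (n+1) = (b ^ m * Ee a b) * (Ee a b) ^ n := by
        rw [pow_succ']
        simp only [mul_assoc]
      rw [e1, hsolve, smul_mul_assoc, sub_mul, smul_mul_assoc]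
      have hB : (b ^ (m+1) * a) * (Ee a b) ^ n
          = (v ^ (n:ℕ)) • ((b ^ (m+1) * (Ee a b) ^ n) * a) := by
        rw [mul_assoc, aEn_comm a b hab n, mul_smul_comm]
        simp only [mul_assoc]
      rw [hB, smul_smul]
      simp only [mul_assoc]
    rw [hstep]
    refine Submodule.smul_mem _ _ (Submodule.sub_mem _ ?_ (Submodule.smul_mem _ _ ?_))
    · exact hleft _ ihm
    · exact hright _ ihm

end AlgebraSide

lemma mulmem_span_pow {A : Type*} [Ring A] [Algebra K A] (a b : A) (N s0 : ℕ) {w : A}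
    (hw : w ∈ Submodule.span K {z : A | ∃ r s : ℕ, z = a ^ r * b ^ N * a ^ s}) :
    w * a ^ s0 ∈ Submodule.span K {z : A | ∃ r s : ℕ, z = a ^ r * b ^ N * a ^ s} := by
  induction hw using Submodule.span_induction with
  | mem z hz =>
    obtain ⟨r, s, rfl⟩ := hz
    refine Submodule.subset_span ⟨r, s + s0, ?_⟩
    rw [pow_add]
    simp only [mul_assoc]
  | zero => rw [zero_mul]; exact Submodule.zero_mem _
  | add y z _ _ hy hz => rw [add_mul]; exact Submodule.add_mem _ hy hz
  | smul c y _ hy => rw [smul_mul_assoc]; exact Submodule.smul_mem _ _ hy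

lemma qfact_two : qfact 2 = qint 2 := by
  unfold qfact
  rw [Finset.prod_range_succ, Finset.prod_range_succ, Finset.prod_range_zero, one_mul]
  norm_num [qint_one]

theorem stmt8 {I A : Type*} [Fintype I] [DecidableEq I] [Ring A] [Algebra K A]
    (θ : I ⊕ I → A) (lamc : I → ℕ)
    (hSerre0 : ∀ i j : I, i ≠ j →
      θ (Sum.inl i) * θ (Sum.inr j) = θ (Sum.inr j) * θ (Sum.inl i))
    (hSerreA2 : ∀ i : I,
      dp (θ (Sum.inl i)) 2 * θ (Sum.inr i)
          - θ (Sum.inl i) * θ (Sum.inr i) * θ (Sum.inl i)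
          + θ (Sum.inr i) * dp (θ (Sum.inl i)) 2 = 0 ∧
      dp (θ (Sum.inr i)) 2 * θ (Sum.inl i)
          - θ (Sum.inr i) * θ (Sum.inl i) * θ (Sum.inr i)
          + θ (Sum.inl i) * dp (θ (Sum.inr i)) 2 = 0)
    (hcommI' : ∀ i j : I, θ (Sum.inr i) * θ (Sum.inr j) = θ (Sum.inr j) * θ (Sum.inr i))
    (tl : A)
    (htl : ∀ L : List I, L.Nodup → (∀ i, i ∈ L) →
      tl = (L.map fun i => dp (θ (Sum.inr i)) (lamc i)).prod) :
    (∀ i j : I, i ≠ j →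
      θ (Sum.inl i) ^ (lamc i + 1) * dp (θ (Sum.inr j)) (lamc j)
        = dp (θ (Sum.inr j)) (lamc j) * θ (Sum.inl i) ^ (lamc i + 1)) ∧
    (∀ i : I,
      dp (θ (Sum.inl i)) (lamc i + 1) * dp (θ (Sum.inr i)) (lamc i)
        = ∑ n ∈ Finset.range (lamc i + 1),
            (v ^ (-(((lamc i + 1 - n : ℕ) : ℤ) * ((lamc i - n : ℕ) : ℤ))) * (qfact n)⁻¹) •
              (dp (θ (Sum.inr i)) (lamc i - n) *
                (θ (Sum.inl i) * θ (Sum.inr i) - v⁻¹ • (θ (Sum.inr i) * θ (Sum.inl i))) ^ n *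
                dp (θ (Sum.inl i)) (lamc i + 1 - n))) ∧
    (∀ x ∈ Submodule.span K {z : A |
        ∃ p ∈ Algebra.adjoin K (Set.range fun i : I => θ (Sum.inl i)),
          ∃ i : I, z = p * θ (Sum.inl i) ^ (lamc i + 1)},
      x * tl ∈
        (Submodule.span K {z : A |
            ∃ p ∈ Algebra.adjoin K (Set.range fun i : I => θ (Sum.inl i)),
              ∃ q ∈ Algebra.adjoin K (Set.range fun i : I => θ (Sum.inl i)),
                z = p * tl * q}) ⊓
        (Submodule.span K {z : A | ∃ w : A, ∃ i : I, z = w * θ (Sum.inl i)})) := by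
  classical
  have hq2 : qint 2 ≠ 0 := qint_pos_ne_zero 2 (by omega)
  -- derive Serre relations in the standard form
  have mk_hab : ∀ i : I, θ (Sum.inl i) * (θ (Sum.inl i) * θ (Sum.inr i))
      + θ (Sum.inr i) * (θ (Sum.inl i) * θ (Sum.inl i))
      = qint 2 • (θ (Sum.inl i) * (θ (Sum.inr i) * θ (Sum.inl i))) := by
    intro i
    set a := θ (Sum.inl i)
    set b := θ (Sum.inr i)
    have h := (hSerreA2 i).1
    unfold dp at h
    rw [qfact_two] at h
    have h2 := congrArg (fun x : A => qint 2 • x) h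
    simp only [smul_sub, smul_add, smul_mul_assoc, mul_smul_comm, smul_smul,
      mul_inv_cancel₀ hq2, one_smul, smul_zero] at h2
    have h4 : a ^ 2 * b - qint 2 • (a * b * a) + b * a ^ 2
        = a * (a * b) + b * (a * a) - qint 2 • (a * (b * a)) := by
      rw [pow_two]
      simp only [mul_assoc]
      abel
    rw [h4] at h2
    exact sub_eq_zero.mp h2
  have mk_hba : ∀ i : I, θ (Sum.inr i) * (θ (Sum.inr i) * θ (Sum.inl i))
      + θ (Sum.inl i) * (θ (Sum.inr i) * θ (Sum.inr i))
      = qint 2 • (θ (Sum.inr i) * (θ (Sum.inl i) * θ (Sum.inr i))) := by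
    intro i
    set a := θ (Sum.inl i)
    set b := θ (Sum.inr i)
    have h := (hSerreA2 i).2
    unfold dp at h
    rw [qfact_two] at h
    have h2 := congrArg (fun x : A => qint 2 • x) h
    simp only [smul_sub, smul_add, smul_mul_assoc, mul_smul_comm, smul_smul,
      mul_inv_cancel₀ hq2, one_smul, smul_zero] at h2
    have h4 : b ^ 2 * a - qint 2 • (b * a * b) + a * b ^ 2
        = b * (b * a) + a * (b * b) - qint 2 • (b * (a * b)) := by
      rw [pow_two]
      simp only [mul_assoc]
      abel
    rw [h4] at h2
    exact sub_eq_zero.mp h2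
  refine ⟨?_, ?_, ?_⟩
  · -- part (1)
    intro i j hij
    have hc : Commute (θ (Sum.inl i)) (θ (Sum.inr j)) := hSerre0 i j hij
    unfold dp
    rw [mul_smul_comm, smul_mul_assoc, (hc.pow_pow (lamc i + 1) (lamc j)).eq]
  · -- part (2)
    intro i
    have h := part2_gen (θ (Sum.inl i)) (θ (Sum.inr i)) (mk_hab i) (mk_hba i) (lamc i)
    simpa only [Ee] using h
  · -- part (3)
    intro x hx
    induction hx using Submodule.span_induction with
    | zero => rw [zero_mul]; exact Submodule.zero_mem _
    | add y z _ _ hy hz => rw [add_mul]; exact Submodule.add_mem _ hy hz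
    | smul c y _ hy => rw [smul_mul_assoc]; exact Submodule.smul_mem _ _ hy
    | mem z hz =>
      obtain ⟨p, hp, i, rfl⟩ := hz
      set a := θ (Sum.inl i) with ha
      set b := θ (Sum.inr i) with hb
      set N := lamc i with hN
      have hab := mk_hab i
      have hba := mk_hba i
      set g : I → A := fun j => dp (θ (Sum.inr j)) (lamc j) with hg
      set L' : List I := (Finset.univ.erase i).toList with hL'
      have hiL' : i ∉ L' := by
        rw [hL', Finset.mem_toList]
        simp
      have hnd : (L' ++ [i]).Nodup := by
        refine List.Nodup.append (Finset.nodup_toList _) (List.nodup_singleton i) ?_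
        intro y hy hy2
        rw [List.mem_singleton] at hy2
        subst hy2
        exact hiL' hy
      have hcompl : ∀ j, j ∈ L' ++ [i] := by
        intro j
        rw [List.mem_append, List.mem_singleton]
        by_cases hj : j = i
        · right; exact hj
        · left
          rw [hL', Finset.mem_toList]
          exact Finset.mem_erase.mpr ⟨hj, Finset.mem_univ j⟩
      set T' : A := (L'.map g).prod with hT'
      have htl' : tl = T' * dp b N := by
        rw [htl (L' ++ [i]) hnd hcompl, List.map_append, List.prod_append]
        simp [hT', hg, hb, hN]
      have hjne : ∀ j ∈ L', j ≠ i := by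
        intro j hj
        rw [hL', Finset.mem_toList, Finset.mem_erase] at hj
        exact hj.1
      have hcommaT' : Commute a T' := by
        apply Commute.list_prod_right
        intro y hy
        rw [List.mem_map] at hy
        obtain ⟨j, hjL, rfl⟩ := hy
        have hji := hjne j hjL
        show Commute a (g j)
        rw [hg]
        unfold dp
        exact Commute.smul_right (Commute.pow_right (hSerre0 i j (Ne.symm hji)) (lamc j)) _
      -- the A2 span
      set SS := Submodule.span K {z : A | ∃ r s : ℕ, z = a ^ r * b ^ N * a ^ s} with hSSpan
      -- transporting SS into the p-tl-q span
      have hTb : T' * b ^ N = qfact N • tl := by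
        rw [htl']
        unfold dp
        rw [mul_smul_comm, smul_smul, mul_inv_cancel₀ (qfact_ne_zero N), one_smul]
      have hamem : a ∈ Algebra.adjoin K (Set.range fun i : I => θ (Sum.inl i)) :=
        Algebra.subset_adjoin ⟨i, rfl⟩
      have htrans : ∀ w ∈ SS,
          p * (T' * w) ∈ Submodule.span K {z : A |
            ∃ p ∈ Algebra.adjoin K (Set.range fun i : I => θ (Sum.inl i)),
              ∃ q ∈ Algebra.adjoin K (Set.range fun i : I => θ (Sum.inl i)),
                z = p * tl * q} := by
        intro w hw
        induction hw using Submodule.span_induction with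
        | mem z hz =>
          obtain ⟨r, s, rfl⟩ := hz
          have hcalc : p * (T' * (a ^ r * b ^ N * a ^ s))
              = qfact N • ((p * a ^ r) * tl * a ^ s) := by
            calc p * (T' * (a ^ r * b ^ N * a ^ s))
                = p * ((T' * a ^ r) * (b ^ N * a ^ s)) := by simp only [mul_assoc]
              _ = p * ((a ^ r * T') * (b ^ N * a ^ s)) := by
                  rw [(hcommaT'.pow_left r).eq]
              _ = p * (a ^ r * ((T' * b ^ N) * a ^ s)) := by simp only [mul_assoc]
              _ = p * (a ^ r * ((qfact N • tl) * a ^ s)) := by rw [hTb]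
              _ = qfact N • ((p * a ^ r) * tl * a ^ s) := by
                  simp only [smul_mul_assoc, mul_smul_comm, mul_assoc]
          rw [hcalc]
          refine Submodule.smul_mem _ _ (Submodule.subset_span ?_)
          exact ⟨p * a ^ r, mul_mem hp (pow_mem hamem r), a ^ s, pow_mem hamem s, rfl⟩
        | zero => rw [mul_zero, mul_zero]; exact Submodule.zero_mem _
        | add y z _ _ hy hz =>
          rw [mul_add, mul_add]; exact Submodule.add_mem _ hy hz
        | smul c y _ hy =>
          rw [mul_smul_comm, mul_smul_comm]; exact Submodule.smul_mem _ _ hy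
      -- main expansion
      have hexp : a ^ (N+1) * dp b N = ∑ n ∈ Finset.range (N+1),
          (qfact (N+1) * (v ^ (-(((N + 1 - n : ℕ) : ℤ) * ((N - n : ℕ) : ℤ))) * (qfact n)⁻¹)) •
            (dp b (N-n) * (Ee a b) ^ n * dp a (N+1-n)) := by
        have h2 := part2_gen a b hab hba N
        have haN : a ^ (N+1) = qfact (N+1) • dp a (N+1) := by
          unfold dp
          rw [smul_smul, mul_inv_cancel₀ (qfact_ne_zero _), one_smul]
        rw [haN, smul_mul_assoc, h2, Finset.smul_sum]
        simp only [smul_smul]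
      have hxtl : (p * a ^ (N+1)) * tl = p * (T' * (a ^ (N+1) * dp b N)) := by
        rw [htl']
        calc (p * a ^ (N+1)) * (T' * dp b N)
            = p * ((a ^ (N+1) * T') * dp b N) := by simp only [mul_assoc]
          _ = p * ((T' * a ^ (N+1)) * dp b N) := by rw [(hcommaT'.pow_left (N+1)).eq]
          _ = p * (T' * (a ^ (N+1) * dp b N)) := by simp only [mul_assoc]
      have hfinal : (p * a ^ (N+1)) * tl = ∑ n ∈ Finset.range (N+1),
          (qfact (N+1) * (v ^ (-(((N + 1 - n : ℕ) : ℤ) * ((N - n : ℕ) : ℤ))) * (qfact n)⁻¹)) •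
            (p * (T' * (dp b (N-n) * (Ee a b) ^ n * dp a (N+1-n)))) := by
        rw [hxtl, hexp, Finset.mul_sum, Finset.mul_sum]
        simp only [mul_smul_comm]
      rw [hfinal]
      refine Submodule.sum_mem _ ?_
      intro n hn
      rw [Finset.mem_range] at hn
      have hnN : n ≤ N := by omega
      refine Submodule.smul_mem _ _ (Submodule.mem_inf.mpr ⟨?_, ?_⟩)
      · -- f tl f part
        have hw0 : b ^ (N-n) * (Ee a b) ^ n ∈ SS :=
          bmE_mem a b hab hba N n (N-n) (by omega)
        have hw1 : (b ^ (N-n) * (Ee a b) ^ n) * a ^ (N+1-n) ∈ SS :=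
          mulmem_span_pow a b N (N+1-n) hw0
        have hterm1 : p * (T' * (dp b (N-n) * (Ee a b) ^ n * dp a (N+1-n)))
            = ((qfact (N-n))⁻¹ * (qfact (N+1-n))⁻¹) •
              (p * (T' * ((b ^ (N-n) * (Ee a b) ^ n) * a ^ (N+1-n)))) := by
          unfold dp
          simp only [smul_mul_assoc, mul_smul_comm, smul_smul, mul_assoc]
          rw [mul_comm ((qfact (N+1-n))⁻¹) ((qfact (N-n))⁻¹)]
        rw [hterm1]
        exact Submodule.smul_mem _ _ (htrans _ hw1)
      · -- ends in θ_i part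
        have h5 : dp a (N+1-n) = (qfact (N+1-n))⁻¹ • (a ^ (N-n) * a) := by
          unfold dp
          rw [show N+1-n = (N-n)+1 from by omega, pow_succ]
        have hterm2 : p * (T' * (dp b (N-n) * (Ee a b) ^ n * dp a (N+1-n)))
            = (qfact (N+1-n))⁻¹ •
              ((p * (T' * (dp b (N-n) * ((Ee a b) ^ n * a ^ (N-n))))) * θ (Sum.inl i)) := by
          rw [h5]
          simp only [mul_smul_comm, smul_mul_assoc, mul_assoc, ← ha]
        rw [hterm2]
        exact Submodule.smul_mem _ _ (Submodule.subset_span ⟨_, i, rfl⟩)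

end
end

section
/- Let V be a ℚ(v)-vector space with a symmetric bilinear form (,) and let B be an almost orthonormal basis of V, i.e. (b,b') ∈ δ_{b,b'} + v^{-1}ℤ[[v^{-1}]] ∩ ℚ(v) for all b,b' ∈ B. Let L(V) = {x ∈ V : (x,x) ∈ A} where A = ℚ[[v^{-1}]] ∩ ℚ(v). Then L(V) is an A-submodule of V, and B is an A-basis of L(V). Moreover, if x lies in the ℤ[v,v^{-1}]-span of B and (x,x) ∈ 1 + v^{-1}A, then there exists b ∈ B with x ≡ ±b mod v^{-1}L(V). -/
/-!
STATEMENT 11 (Lusztig 14.2.2): Let V be a ℚ(v)-vector space with a symmetric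
bilinear form and B an almost orthonormal basis:
(b,b') ∈ δ_{b,b'} + v⁻¹ℤ[[v⁻¹]] ∩ ℚ(v).  Let A = ℚ[[v⁻¹]] ∩ ℚ(v) and
L(V) = {x | (x,x) ∈ A}.  Then L(V) is an A-submodule of V with A-basis B, and
if x lies in the ℤ[v,v⁻¹]-span of B with (x,x) ∈ 1 + v⁻¹A, then
x ≡ ±b mod v⁻¹L(V) for some b ∈ B.

Membership in A (resp. v⁻¹ℤ[[v⁻¹]] ∩ ℚ(v)) is expressed via the expansion at
v = ∞ using a ring endomorphism σ with σ v = v⁻¹ and the Laurent expansion at 0.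
-/

open scoped BigOperators

noncomputable section

/-- `f ∈ A = ℚ[[v⁻¹]] ∩ ℚ(v)`. -/
def memA (σ : K →+* K) (f : K) : Prop :=
  ∀ n : ℤ, n < 0 → ((σ f : LaurentSeries ℚ)).coeff n = 0

/-- `f ∈ v⁻¹ℤ[[v⁻¹]] ∩ ℚ(v)`. -/
def memZvinv (σ : K →+* K) (f : K) : Prop :=
  (∀ n : ℤ, n ≤ 0 → ((σ f : LaurentSeries ℚ)).coeff n = 0) ∧
  (∀ n : ℤ, ∃ m : ℤ, ((σ f : LaurentSeries ℚ)).coeff n = (m : ℚ))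

/-- `f ∈ ℤ[v, v⁻¹]`. -/
def isLaurentInt (f : K) : Prop :=
  ∃ g : ℤ →₀ ℤ, f = g.sum fun k a => (a : K) * v ^ k

set_option maxHeartbeats 1000000
set_option synthInstance.maxHeartbeats 400000

abbrev Ls : Type := LaurentSeries ℚ

open scoped RatFunc

/-- The expansion map: apply `σ` then expand as Laurent series. -/
def E (σ : K →+* K) : K →+* Ls := (algebraMap (RatFunc ℚ) (LaurentSeries ℚ)).comp σ

lemma E_apply (σ : K →+* K) (f : K) : E σ f = ((σ f : K) : Ls) := rfl

/-- All coefficients below `a` vanish. -/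
def geA (F : Ls) (a : ℤ) : Prop := ∀ n < a, F.coeff n = 0

lemma memA_iff (σ : K →+* K) (f : K) : memA σ f ↔ geA (E σ f) 0 := Iff.rfl

lemma geA_mul {F G : Ls} {a c : ℤ} (hF : geA F a) (hG : geA G c) : geA (F * G) (a + c) := by
  intro n hn
  rw [HahnSeries.coeff_mul]
  apply Finset.sum_eq_zero
  rintro ⟨i, j⟩ hij
  rw [Finset.mem_addAntidiagonal] at hij
  obtain ⟨hi, hj, hs⟩ := hij
  by_contra h
  have hFi : F.coeff i ≠ 0 := HahnSeries.mem_support F i |>.mp hi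
  have hGj : G.coeff j ≠ 0 := HahnSeries.mem_support G j |>.mp hj
  have h1 : a ≤ i := le_of_not_gt fun hlt => hFi (hF i hlt)
  have h2 : c ≤ j := le_of_not_gt fun hlt => hGj (hG j hlt)
  omega

lemma geA_mul_coeff {F G : Ls} {a c : ℤ} (hF : geA F a) (hG : geA G c) :
    (F * G).coeff (a + c) = F.coeff a * G.coeff c := by
  rw [HahnSeries.coeff_mul]
  apply Finset.sum_eq_single (a, c)
  · rintro ⟨i, j⟩ hij hne
    rw [Finset.mem_addAntidiagonal] at hij
    obtain ⟨hi, hj, hs⟩ := hij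
    have hFi : F.coeff i ≠ 0 := HahnSeries.mem_support F i |>.mp hi
    have hGj : G.coeff j ≠ 0 := HahnSeries.mem_support G j |>.mp hj
    have h1 : a ≤ i := le_of_not_gt fun hlt => hFi (hF i hlt)
    have h2 : c ≤ j := le_of_not_gt fun hlt => hGj (hG j hlt)
    exfalso; apply hne
    have hia : i = a := by omega
    have hjc : j = c := by omega
    simp_all
  · intro h
    rw [Finset.mem_addAntidiagonal] at h
    push_neg at h
    by_cases ha : F.coeff a = 0
    · simp [ha]
    by_cases hc : G.coeff c = 0
    · simp [hc]
    exact absurd rfl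
      (h (HahnSeries.mem_support F a |>.mpr ha) (HahnSeries.mem_support G c |>.mpr hc))

lemma geA_mul0 {F G : Ls} (hF : geA F 0) (hG : geA G 0) : geA (F * G) 0 := by
  have := geA_mul hF hG
  simpa using this

lemma geA_add {F G : Ls} {a : ℤ} (hF : geA F a) (hG : geA G a) : geA (F + G) a := by
  intro n hn; rw [HahnSeries.coeff_add, hF n hn, hG n hn, add_zero]

lemma geA_zero {a : ℤ} : geA (0 : Ls) a := fun _ _ => rfl

lemma geA_one : geA (1 : Ls) 0 := by
  intro n hn
  rw [HahnSeries.coeff_one, if_neg (by omega)]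

lemma geA_mono {F : Ls} {a a' : ℤ} (h : geA F a) (h' : a' ≤ a) : geA F a' :=
  fun n hn => h n (lt_of_lt_of_le hn h')

lemma geA_sum {α : Type*} {s : Finset α} {f : α → Ls} {a : ℤ}
    (h : ∀ i ∈ s, geA (f i) a) : geA (∑ i ∈ s, f i) a := by
  classical
  induction s using Finset.induction_on with
  | empty => simpa using geA_zero
  | insert _ _ hx ih =>
    rw [Finset.sum_insert hx]
    exact geA_add (h _ (Finset.mem_insert_self _ _))
      (ih fun i hi => h i (Finset.mem_insert_of_mem hi))

lemma coeff_sum {α : Type*} (s : Finset α) (f : α → Ls) (n : ℤ) :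
    (∑ i ∈ s, f i).coeff n = ∑ i ∈ s, (f i).coeff n := by
  classical
  induction s using Finset.induction_on with
  | empty => simp
  | insert _ _ ha ih => rw [Finset.sum_insert ha, Finset.sum_insert ha, HahnSeries.coeff_add, ih]

lemma memA_add {σ : K →+* K} {f g : K} (hf : memA σ f) (hg : memA σ g) : memA σ (f + g) := by
  rw [memA_iff] at *
  rw [map_add]
  exact geA_add hf hg

lemma memA_mul {σ : K →+* K} {f g : K} (hf : memA σ f) (hg : memA σ g) : memA σ (f * g) := by
  rw [memA_iff] at *
  rw [map_mul]
  exact geA_mul0 hf hg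

lemma E_v {σ : K →+* K} (hσ : σ v = v⁻¹) : E σ v = HahnSeries.single (-1 : ℤ) (1 : ℚ) := by
  have hv : ((v : K) : Ls) = HahnSeries.single (1 : ℤ) (1 : ℚ) := RatFunc.coe_X
  have h1 : (HahnSeries.single (-1 : ℤ) (1 : ℚ)) * ((v : K) : Ls) = 1 := by
    rw [hv, HahnSeries.single_mul_single]
    norm_num [HahnSeries.single_zero_one]
  have h2 : E σ v = (((v : K) : Ls))⁻¹ := by
    show ((σ v : K) : Ls) = _
    rw [hσ, map_inv₀]
  rw [h2, inv_eq_of_mul_eq_one_left h1]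

lemma single_npow (a : ℤ) (n : ℕ) :
    (HahnSeries.single a (1 : ℚ)) ^ n = HahnSeries.single (n • a) (1 : ℚ) := by
  induction n with
  | zero => simp [HahnSeries.single_zero_one]
  | succ n ih =>
    rw [pow_succ, ih, HahnSeries.single_mul_single, mul_one, succ_nsmul]

lemma single_inv (a : ℤ) :
    (HahnSeries.single a (1 : ℚ) : Ls)⁻¹ = HahnSeries.single (-a) (1 : ℚ) := by
  refine inv_eq_of_mul_eq_one_left ?_
  rw [HahnSeries.single_mul_single]
  norm_num [HahnSeries.single_zero_one]

lemma single_zpow (k : ℤ) :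
    (HahnSeries.single (-1 : ℤ) (1 : ℚ) : Ls) ^ k = HahnSeries.single (-k) (1 : ℚ) := by
  cases k with
  | ofNat n => rw [Int.ofNat_eq_coe, zpow_natCast, single_npow]; norm_num
  | negSucc n =>
    rw [zpow_negSucc, single_npow, single_inv]
    congr 1
    simp [Int.negSucc_eq]

lemma E_v_mul {σ : K →+* K} (hσ : σ v = v⁻¹) (f : K) (n : ℤ) :
    (E σ (v * f)).coeff n = (E σ f).coeff (n + 1) := by
  rw [map_mul, E_v hσ]
  have := HahnSeries.coeff_single_mul_add (r := (1 : ℚ)) (x := E σ f) (a := n + 1) (b := -1)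
  simpa using this

lemma memA_v_mul_iff {σ : K →+* K} (hσ : σ v = v⁻¹) (f : K) :
    memA σ (v * f) ↔ ∀ n : ℤ, n ≤ 0 → (E σ f).coeff n = 0 := by
  constructor
  · intro h n hn
    have := h (n - 1) (by omega)
    rwa [show ((σ (v * f) : K) : Ls) = E σ (v * f) from rfl, E_v_mul hσ, sub_add_cancel] at this
  · intro h n hn
    show (E σ (v * f)).coeff n = 0
    rw [E_v_mul hσ]
    exact h (n + 1) (by omega)

lemma E_intCast (σ : K →+* K) (mm : ℤ) :
    E σ ((mm : ℤ) : K) = HahnSeries.single (0 : ℤ) ((mm : ℚ)) := by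
  rw [map_intCast, ← map_intCast (HahnSeries.C : ℚ →+* Ls) mm, HahnSeries.C_apply]

/-- integer Laurent polynomials have integer coefficient at `0`. -/
lemma int_coeff_zero {σ : K →+* K} (hσ : σ v = v⁻¹) {f : K} (h : isLaurentInt f) :
    ∃ m : ℤ, (E σ f).coeff 0 = (m : ℚ) := by
  obtain ⟨g, rfl⟩ := h
  refine ⟨∑ k ∈ g.support, if (0 : ℤ) = -k then g k else 0, ?_⟩
  rw [Finsupp.sum, map_sum, coeff_sum]
  rw [Int.cast_sum]
  apply Finset.sum_congr rfl
  intro k _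
  have h1 : E σ ((g k : K) * v ^ k) = HahnSeries.single (-k) ((g k : ℚ)) := by
    rw [map_mul, map_zpow₀, E_v hσ, single_zpow]
    have h2 : E σ ((g k : K)) = HahnSeries.single (0 : ℤ) ((g k : ℚ)) := E_intCast σ (g k)
    rw [h2, HahnSeries.single_mul_single, zero_add, mul_one]
  rw [h1, HahnSeries.coeff_single]
  split <;> simp_all

section Bil
variable {ι V : Type*} [DecidableEq ι] [AddCommGroup V] [Module K V]
  (σ : K →+* K) (b : Module.Basis ι K V) (B : V →ₗ[K] V →ₗ[K] K)

lemma expand (c : ι →₀ K) :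
    B (c.sum fun i a => a • b i) (c.sum fun i a => a • b i) =
      ∑ i ∈ c.support, ∑ j ∈ c.support, c i * c j * B (b i) (b j) := by
  rw [Finsupp.sum]
  simp only [map_sum, map_smul, LinearMap.sum_apply, LinearMap.smul_apply, smul_eq_mul,
    Finset.mul_sum]
  rw [Finset.sum_comm]
  exact Finset.sum_congr rfl fun i _ => Finset.sum_congr rfl fun j _ => by ring

variable (hao : ∀ i j : ι, memZvinv σ (B (b i) (b j) - if i = j then 1 else 0))
include hao

lemma coeff_key (c : ι →₀ K) {N : ℤ} (hN : ∀ i ∈ c.support, geA (E σ (c i)) N) :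
    (E σ (B (c.sum fun i a => a • b i) (c.sum fun i a => a • b i))).coeff (N + N) =
      ∑ i ∈ c.support, ((E σ (c i)).coeff N) * ((E σ (c i)).coeff N) := by
  rw [expand, map_sum, coeff_sum]
  apply Finset.sum_congr rfl
  intro i hi
  rw [map_sum, coeff_sum]
  have hterm : ∀ j ∈ c.support,
      (E σ (c i * c j * B (b i) (b j))).coeff (N + N) =
        if i = j then ((E σ (c i)).coeff N) * ((E σ (c i)).coeff N) else 0 := by
    intro j hj
    have hsplit : c i * c j * B (b i) (b j) =
        c i * c j * (if i = j then 1 else 0) +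
          c i * c j * (B (b i) (b j) - if i = j then 1 else 0) := by ring
    have hε : geA (E σ (B (b i) (b j) - if i = j then 1 else 0)) 1 :=
      fun p hp => (hao i j).1 p (by omega)
    rw [hsplit, map_add, HahnSeries.coeff_add]
    have h2 : (E σ (c i * c j * (B (b i) (b j) - if i = j then 1 else 0))).coeff (N + N) = 0 := by
      rw [map_mul, map_mul]
      exact geA_mul (geA_mul (hN i hi) (hN j hj)) hε (N + N) (by omega)
    rw [h2, add_zero]
    by_cases hij : i = j
    · subst hij
      simp only [eq_self_iff_true, if_true, mul_one, map_mul]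
      exact geA_mul_coeff (hN i hi) (hN i hi)
    · simp [hij]
  rw [Finset.sum_congr rfl hterm, Finset.sum_ite_eq c.support i
    (fun _ => ((E σ (c i)).coeff N) * ((E σ (c i)).coeff N)), if_pos hi]

lemma key_forward (c : ι →₀ K)
    (h : memA σ (B (c.sum fun i a => a • b i) (c.sum fun i a => a • b i))) :
    ∀ i, memA σ (c i) := by
  by_contra hcon
  push_neg at hcon
  obtain ⟨i₀, hi₀⟩ := hcon
  rw [memA] at hi₀
  push_neg at hi₀
  obtain ⟨n₀, hn₀, hc₀⟩ := hi₀
  have hc₀' : (E σ (c i₀)).coeff n₀ ≠ 0 := hc₀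
  have hi₀s : i₀ ∈ c.support := by
    rw [Finsupp.mem_support_iff]
    intro hz
    rw [hz, map_zero] at hc₀'
    exact hc₀' rfl
  obtain ⟨i₁, hi₁, hmin⟩ := Finset.exists_min_image c.support
    (fun i => (E σ (c i)).order) ⟨i₀, hi₀s⟩
  set N := (E σ (c i₁)).order with hNdef
  have hN : ∀ i ∈ c.support, geA (E σ (c i)) N := fun i hi n hn =>
    HahnSeries.coeff_eq_zero_of_lt_order (lt_of_lt_of_le hn (hmin i hi))
  have hNneg : N < 0 :=
    lt_of_le_of_lt (le_trans (hmin i₀ hi₀s) (HahnSeries.order_le_of_coeff_ne_zero hc₀')) hn₀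
  have hkey := coeff_key σ b B hao c hN
  have hzero : (E σ (B (c.sum fun i a => a • b i) (c.sum fun i a => a • b i))).coeff (N + N)
      = 0 := h (N + N) (by omega)
  rw [hzero] at hkey
  have hE1 : E σ (c i₁) ≠ 0 := by
    intro hz
    exact Finsupp.mem_support_iff.mp hi₁ (RingHom.injective (E σ) (by rw [hz, map_zero]))
  have hpos : 0 < ∑ i ∈ c.support, ((E σ (c i)).coeff N) * ((E σ (c i)).coeff N) := by
    apply Finset.sum_pos'
    · intro i _; exact mul_self_nonneg _
    · exact ⟨i₁, hi₁, mul_self_pos.mpr (mt HahnSeries.coeff_order_eq_zero.mp hE1)⟩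
  rw [← hkey] at hpos
  exact lt_irrefl 0 hpos

lemma memA_of_coords (c : ι →₀ K) (h : ∀ i, memA σ (c i)) :
    memA σ (B (c.sum fun i a => a • b i) (c.sum fun i a => a • b i)) := by
  rw [memA_iff, expand, map_sum]
  apply geA_sum
  intro i _
  rw [map_sum]
  apply geA_sum
  intro j _
  have hsplit : c i * c j * B (b i) (b j) =
      c i * c j * (if i = j then 1 else 0) +
        c i * c j * (B (b i) (b j) - if i = j then 1 else 0) := by ring
  have hε1 : geA (E σ (B (b i) (b j) - if i = j then 1 else 0)) 1 :=
    fun p hp => (hao i j).1 p (by omega)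
  have hε : geA (E σ (B (b i) (b j) - if i = j then 1 else 0)) 0 := geA_mono hε1 (by omega)
  have hδ : geA (E σ (if i = j then 1 else 0)) 0 := by
    by_cases hij : i = j
    · simp only [if_pos hij, map_one]
      exact geA_one
    · simp only [if_neg hij, map_zero]
      exact geA_zero
  rw [hsplit, map_add]
  exact geA_add (by rw [map_mul, map_mul]; exact geA_mul0 (geA_mul0 (h i) (h j)) hδ)
    (by rw [map_mul, map_mul]; exact geA_mul0 (geA_mul0 (h i) (h j)) hε)

end Bil

lemma geA_of_memA {σ : K →+* K} {f : K} (h : memA σ f) : geA (E σ f) 0 :=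
  (memA_iff σ f).mp h

theorem stmt11 {ι V : Type*} [DecidableEq ι] [AddCommGroup V] [Module K V]
    (σ : K →+* K) (hσ : σ v = v⁻¹)
    (b : Module.Basis ι K V) (B : V →ₗ[K] V →ₗ[K] K)
    (hsymm : ∀ x y : V, B x y = B y x)
    (hao : ∀ i j : ι, memZvinv σ (B (b i) (b j) - if i = j then 1 else 0)) :
    -- (a) L(V) is an A-submodule of V ...
    (∀ x y : V, memA σ (B x x) → memA σ (B y y) → memA σ (B (x + y) (x + y))) ∧
    (∀ (a : K) (x : V), memA σ a → memA σ (B x x) → memA σ (B (a • x) (a • x))) ∧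
    -- ... with A-basis B: L(V) is exactly the set of A-linear combinations of B
    (∀ x : V, memA σ (B x x) ↔
      ∃ c : ι →₀ K, (∀ i, memA σ (c i)) ∧ x = c.sum fun i a => a • b i) ∧
    -- (b) the ±b congruence
    (∀ x : V,
      (∃ d : ι →₀ K, (∀ i, isLaurentInt (d i)) ∧ x = d.sum fun i a => a • b i) →
      memA σ (v * (B x x - 1)) →
      ∃ (i : ι) (ε : ℤ), (ε = 1 ∨ ε = -1) ∧
        ∃ c : ι →₀ K, (∀ j, memA σ (v * c j)) ∧
          x - (ε : K) • b i = c.sum fun j a => a • b j) := by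
  have hL : ∀ e : ι →₀ K, (e.sum fun i a => a • b i) = Finsupp.linearCombination K (⇑b) e :=
    fun e => (Finsupp.linearCombination_apply _ _).symm
  have hiff : ∀ x : V, memA σ (B x x) ↔
      ∃ c : ι →₀ K, (∀ i, memA σ (c i)) ∧ x = c.sum fun i a => a • b i := by
    intro x
    constructor
    · intro h
      have hx : x = (b.repr x).sum fun i a => a • b i := by
        rw [hL, b.linearCombination_repr]
      exact ⟨b.repr x, key_forward σ b B hao (b.repr x) (by rwa [← hx]), hx⟩
    · rintro ⟨c, hc, rfl⟩
      exact memA_of_coords σ b B hao c hc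
  refine ⟨?_, ?_, hiff, ?_⟩
  · -- closure under addition
    intro x y hx hy
    obtain ⟨c, hc, hxe⟩ := (hiff x).mp hx
    obtain ⟨c', hc', hye⟩ := (hiff y).mp hy
    refine (hiff (x + y)).mpr ⟨c + c', fun i => ?_, ?_⟩
    · rw [Finsupp.add_apply]
      exact memA_add (hc i) (hc' i)
    · rw [hL, map_add, ← hL, ← hL, hxe, hye]
  · -- closure under A-scalar multiplication
    intro a x ha hx
    obtain ⟨c, hc, hxe⟩ := (hiff x).mp hx
    refine (hiff (a • x)).mpr ⟨a • c, fun i => ?_, ?_⟩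
    · rw [Finsupp.smul_apply, smul_eq_mul]
      exact memA_mul ha (hc i)
    · rw [hL, map_smul, ← hL, hxe]
  · -- part (b)
    rintro x ⟨d, hdint, hxe⟩ h1
    have hBxx : memA σ (B x x) := by
      intro n hn
      show (E σ (B x x)).coeff n = 0
      have hseq : (E σ (B x x)) = E σ (B x x - 1) + 1 := by
        rw [map_sub, map_one]; ring
      rw [hseq, HahnSeries.coeff_add, (memA_v_mul_iff hσ _).mp h1 n (by omega),
        geA_one n hn, add_zero]
    have hd : ∀ i, memA σ (d i) := key_forward σ b B hao d (by rwa [← hxe])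
    choose m hm using fun i => int_coeff_zero hσ (hdint i)
    have hc0 : (E σ (B x x)).coeff 0 = 1 := by
      have h0 := (memA_v_mul_iff hσ _).mp h1 0 le_rfl
      rw [map_sub, map_one, HahnSeries.coeff_sub, HahnSeries.coeff_one, if_pos rfl] at h0
      linarith
    have hkey := coeff_key σ b B hao d (N := 0) (fun i _ => geA_of_memA (hd i))
    rw [← hxe] at hkey
    rw [show ((0 : ℤ) + 0) = 0 by ring, hc0] at hkey
    have hsum1 : ∑ i ∈ d.support, m i * m i = 1 := by
      have hq : ((∑ i ∈ d.support, m i * m i : ℤ) : ℚ) = ((1 : ℤ) : ℚ) := by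
        push_cast
        rw [show (1 : ℚ) = ∑ i ∈ d.support, ((E σ (d i)).coeff 0) * ((E σ (d i)).coeff 0)
          from hkey]
        exact Finset.sum_congr rfl fun i _ => by rw [hm i]
      exact_mod_cast hq
    have hex : ∃ i ∈ d.support, m i ≠ 0 := by
      by_contra hall
      push_neg at hall
      rw [Finset.sum_eq_zero (fun i hi => by rw [hall i hi, mul_zero])] at hsum1
      exact absurd hsum1 (by norm_num)
    obtain ⟨i₁, hi₁, hm₁⟩ := hex
    have hsplit : ∑ j ∈ d.support.erase i₁, m j * m j + m i₁ * m i₁ = 1 := by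
      rw [Finset.sum_erase_add _ _ hi₁]; exact hsum1
    have hge1 : 1 ≤ m i₁ * m i₁ := by
      rcases lt_or_gt_of_ne hm₁ with h | h <;> nlinarith
    have hrest_nonneg : 0 ≤ ∑ j ∈ d.support.erase i₁, m j * m j :=
      Finset.sum_nonneg fun j _ => mul_self_nonneg _
    have hsq1 : m i₁ * m i₁ = 1 := by linarith
    have hS0 : ∑ j ∈ d.support.erase i₁, m j * m j = 0 := by linarith
    have hmj : ∀ j ∈ d.support.erase i₁, m j = 0 := fun j hj =>
      mul_self_eq_zero.mp
        ((Finset.sum_eq_zero_iff_of_nonneg fun j _ => mul_self_nonneg (m j)).mp hS0 j hj)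
    refine ⟨i₁, m i₁, Int.isUnit_iff.mp (IsUnit.of_mul_eq_one _ hsq1),
      d - Finsupp.single i₁ ((m i₁ : ℤ) : K), ?_, ?_⟩
    · intro j
      rw [memA_v_mul_iff hσ]
      intro n hn
      have hcj : (d - Finsupp.single i₁ ((m i₁ : ℤ) : K)) j =
          d j - (if i₁ = j then ((m i₁ : ℤ) : K) else 0) := by
        rw [Finsupp.sub_apply, Finsupp.single_apply]
      rw [hcj, map_sub, HahnSeries.coeff_sub]
      by_cases hj : i₁ = j
      · subst hj
        rw [if_pos rfl, E_intCast, HahnSeries.coeff_single]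
        rcases eq_or_lt_of_le hn with h0 | hneg
        · rw [if_pos h0, h0, hm i₁, sub_self]
        · rw [if_neg (by omega), geA_of_memA (hd i₁) n hneg, sub_zero]
      · rw [if_neg hj, map_zero]
        show (E σ (d j)).coeff n - (0 : Ls).coeff n = 0
        rw [HahnSeries.coeff_zero, sub_zero]
        rcases eq_or_lt_of_le hn with h0 | hneg
        · subst h0
          by_cases hjs : j ∈ d.support
          · rw [hm j]
            have : m j = 0 := hmj j (Finset.mem_erase.mpr ⟨fun he => hj he.symm, hjs⟩)
            rw [this, Int.cast_zero]
          · rw [Finsupp.notMem_support_iff.mp hjs, map_zero, HahnSeries.coeff_zero]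
        · exact geA_of_memA (hd j) n hneg
    · rw [hL, map_sub, ← hL, ← hxe, Finsupp.linearCombination_single]

end
end
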